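/- Let s ≥ 1, let k ≥ 1, and let i_1,…,i_k ∈ ℤ/sℤ. In the free ℤ-module ℤA with basis {a_x : x a word over ℤ/sℤ}, equipped with the associative ℤ-bilinear product a_x ⊗ a_y = Σ_{(v,z,w) : x = vz, y = z̄w} (a_{vw} + a_{v·w}) (term a_{v·w} omitted whenever v or w is empty), consider the product P = (a_{i_1} + δ_{i_1,0}·a_∅) ⊗ (a_{i_2} + δ_{i_2,0}·a_∅) ⊗ ⋯ ⊗ (a_{i_k} + δ_{i_k,0}·a_∅), where a_{i_r} denotes the basis element of the one-letter word i_r and δ_{i_r,0} = 1 if i_r = 0 in ℤ/sℤ and 0 otherwise. Then the coefficient of a_∅ in P equals the number of noncrossing partitions π of {1,…,k} such that for every block B of π, the sum Σ_{r ∈ B} i_r equals 0 in ℤ/sℤ. -/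

import Mathlib

/-- The involution on words over `ℤ/sℤ`: `(i_1 … i_k)⁻ = (-i_k) … (-i_1)`. -/
def wordInv (s : ℕ) (x : List (ZMod s)) : List (ZMod s) :=
  (x.map fun a => -a).reverse

/-- The fusion term: for nonempty `v = v'i` and `w = jw'`, the basis element of
`v · w = v'(i+j)w'`; it is `0` (omitted) when `v` or `w` is empty. -/
noncomputable def fuseTerm (s : ℕ) (v w : List (ZMod s)) : List (ZMod s) →₀ ℤ :=
  match v.getLast?, w with
  | some i, j :: w' => Finsupp.single (v.dropLast ++ (i + j) :: w') 1
  | _, _ => 0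

/-- The product of two basis elements `a_x ⊗ a_y`: the sum over all decompositions
`x = vz`, `y = z̄w` of `a_{vw} + a_{v·w}` (the second term omitted when `v` or `w`
is empty). Decompositions are parametrized by the length `t` of `z`. -/
noncomputable def basisMul (s : ℕ) (x y : List (ZMod s)) : List (ZMod s) →₀ ℤ :=
  ∑ t ∈ Finset.range (min x.length y.length + 1),
    if y.take t = wordInv s (x.drop (x.length - t)) then
      Finsupp.single (x.take (x.length - t) ++ y.drop t) 1 +
        fuseTerm s (x.take (x.length - t)) (y.drop t)
    else 0

/-- The `ℤ`-bilinear extension of `basisMul` to the free `ℤ`-module on the words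
over `ℤ/sℤ`. -/
noncomputable def fusionMul (s : ℕ) (f g : List (ZMod s) →₀ ℤ) : List (ZMod s) →₀ ℤ :=
  f.sum fun x cx => g.sum fun y cy => (cx * cy) • basisMul s x y

/-- `P` is a partition of `{1, …, k}`, encoded as a finite set of blocks. -/
def IsPartitionOfFin (k : ℕ) (P : Finset (Finset (Fin k))) : Prop :=
  ∅ ∉ P ∧ ∀ x : Fin k, ∃! B, B ∈ P ∧ x ∈ B

/-- A partition of `{1, …, k}` is noncrossing if there are no `a < b < c < d` with
`a, c` in one block and `b, d` in a different block. -/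
def IsNoncrossingFin (k : ℕ) (P : Finset (Finset (Fin k))) : Prop :=
  ¬ ∃ a b c d : Fin k, a < b ∧ b < c ∧ c < d ∧
      (∃ B ∈ P, a ∈ B ∧ c ∈ B) ∧ (∃ B ∈ P, b ∈ B ∧ d ∈ B) ∧
        ¬ (∃ B ∈ P, a ∈ B ∧ b ∈ B)


namespace FusionNC

lemma basisMul_nil_left (s : ℕ) (y : List (ZMod s)) :
    basisMul s [] y = Finsupp.single y 1 := by
  simp [basisMul, wordInv, fuseTerm]

lemma basisMul_single_nil (s : ℕ) (c : ZMod s) :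
    basisMul s [c] [] = Finsupp.single [c] 1 := by
  simp [basisMul, wordInv, fuseTerm]

lemma basisMul_single_cons (s : ℕ) (c j : ZMod s) (y' : List (ZMod s)) :
    basisMul s [c] (j :: y') =
      Finsupp.single (c :: j :: y') 1 + Finsupp.single ((c + j) :: y') 1 +
        (if j = -c then Finsupp.single y' 1 else 0) := by
  have h2 : min [c].length (j :: y').length + 1 = 2 := by simp
  rw [basisMul, h2]
  rw [Finset.sum_range_succ, Finset.sum_range_one]
  have ht0 : (j :: y').take 0 = wordInv s ([c].drop ([c].length - 0)) := by
    simp [wordInv]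
  rw [if_pos ht0]
  have hft : fuseTerm s [c] (j :: y')
      = Finsupp.single ((c + j) :: y') 1 := rfl
  have hcond : ((j :: y').take 1 = wordInv s ([c].drop ([c].length - 1))) ↔ j = -c := by
    simp [wordInv]
  by_cases hj : j = -c
  · rw [if_pos (hcond.mpr hj), if_pos hj]
    simp [fuseTerm, hft]
  · rw [if_neg (fun h => hj (hcond.mp h)), if_neg hj]
    rw [show List.take ([c].length - 0) [c] = [c] from rfl,
      show List.drop 0 (j :: y') = j :: y' from rfl, hft]
    simp

lemma single_point_sum {α : Type*} [DecidableEq α] (g : α →₀ ℤ) (y₀ : α) :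
    (g.sum fun y cy => if y = y₀ then cy else 0) = g y₀ := by
  rw [Finsupp.sum, Finset.sum_ite_eq' g.support y₀ (fun y => g y)]
  by_cases h : y₀ ∈ g.support
  · rw [if_pos h]
  · rw [if_neg h, eq_comm, ← Finsupp.notMem_support_iff]; exact h

lemma fusionMul_id_left (s : ℕ) (g : List (ZMod s) →₀ ℤ) :
    fusionMul s (Finsupp.single [] 1) g = g := by
  rw [fusionMul, Finsupp.sum_single_index]
  · rw [show (fun (y : List (ZMod s)) (cy : ℤ) => ((1:ℤ) * cy) • basisMul s [] y)
        = fun y cy => Finsupp.single y cy by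
      funext y cy; rw [basisMul_nil_left, one_mul, Finsupp.smul_single, smul_eq_mul, mul_one]]
    exact Finsupp.sum_single g
  · simp

lemma fusionMul_add_left (s : ℕ) (f₁ f₂ g : List (ZMod s) →₀ ℤ) :
    fusionMul s (f₁ + f₂) g = fusionMul s f₁ g + fusionMul s f₂ g := by
  unfold fusionMul
  apply Finsupp.sum_add_index' <;> intro x
  · simp
  · intro c₁ c₂
    rw [← Finsupp.sum_add]
    congr 1; funext y cy
    rw [add_mul, add_smul]

lemma sum_zero_terms {α : Type*} (g : α →₀ ℤ) {F : α → ℤ → ℤ}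
    (h : ∀ y cy, F y cy = 0) : g.sum F = 0 :=
  (Finsupp.sum_congr fun y _ => h y (g y)).trans (Finsupp.sum_fun_zero g)

lemma key_mul_apply (s : ℕ) (c : ZMod s) (g : List (ZMod s) →₀ ℤ) (w : List (ZMod s)) :
    (fusionMul s (Finsupp.single [c] 1) g) w =
      (match w with
       | [] => 0
       | j :: w' => (if c = j then g w' else 0) + g ((j - c) :: w'))
      + g ((-c) :: w) := by
  rw [fusionMul, Finsupp.sum_single_index (by simp)]
  rw [Finsupp.sum_apply]
  have hterm : ∀ (y : List (ZMod s)) (cy : ℤ),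
      (((1 : ℤ) * cy) • basisMul s [c] y) w =
        ((if c :: y = w then cy else 0) +
          (match y with
           | [] => 0
           | j' :: y' => if (c + j') :: y' = w then cy else 0)) +
          (if y = (-c) :: w then cy else 0) := by
    intro y cy
    rw [Finsupp.smul_apply, smul_eq_mul, one_mul]
    match y with
    | [] =>
      rw [basisMul_single_nil]
      simp only [Finsupp.single_apply]
      have : ([] : List (ZMod s)) ≠ (-c) :: w := by simp
      rw [if_neg this]
      split_ifs <;> simp [smul_eq_mul, mul_comm]
    | j' :: y' =>
      rw [basisMul_single_cons]
      simp only [Finsupp.add_apply, Finsupp.single_apply]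
      have h3 : (if j' = -c then Finsupp.single y' (1:ℤ) else 0) w
          = if j' :: y' = (-c) :: w then 1 else 0 := by
        by_cases hj : j' = -c
        · rw [if_pos hj, Finsupp.single_apply]
          subst hj; simp [eq_comm]
        · rw [if_neg hj]
          have : j' :: y' ≠ (-c) :: w := by simp [hj]
          rw [if_neg this]; simp
      rw [h3]
      split_ifs <;> ring
  rw [show (fun (y : List (ZMod s)) (cy : ℤ) => (((1:ℤ) * cy) • basisMul s [c] y) w)
      = fun (y : List (ZMod s)) (cy : ℤ) =>
        ((if c :: y = w then cy else 0) +
          (match y with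
           | [] => (0:ℤ)
           | j' :: y' => if (c + j') :: y' = w then cy else 0)) +
          (if y = (-c) :: w then cy else 0) from
    funext fun y => funext fun cy => hterm y cy]
  rw [Finsupp.sum_add, Finsupp.sum_add, single_point_sum]
  rcases w with _ | ⟨j, w'⟩
  · have h1 : (g.sum fun (y : List (ZMod s)) (cy : ℤ) => if c :: y = [] then cy else 0) = 0 :=
      sum_zero_terms g (fun y cy => by simp)
    have h2 : (g.sum fun (y : List (ZMod s)) (cy : ℤ) =>
        (match y with
         | [] => (0:ℤ)
         | j' :: y' => if (c + j') :: y' = [] then cy else 0)) = 0 :=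
      sum_zero_terms g (fun y cy => by cases y <;> simp)
    rw [h1, h2]
    simp
  · have h2 : (g.sum fun (y : List (ZMod s)) (cy : ℤ) =>
        (match y with
         | [] => (0:ℤ)
         | j' :: y' => if (c + j') :: y' = j :: w' then cy else 0)) = g ((j - c) :: w') := by
      rw [show (fun (y : List (ZMod s)) (cy : ℤ) =>
          (match y with
           | [] => (0:ℤ)
           | j' :: y' => if (c + j') :: y' = j :: w' then cy else 0))
          = fun (y : List (ZMod s)) (cy : ℤ) => if y = (j - c) :: w' then cy else 0 by
        funext y cy
        match y with
        | [] => simp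
        | j' :: y' =>
          simp only [List.cons.injEq]
          by_cases h1 : j' = j - c
          · subst h1; simp
          · have hne : ¬(c + j' = j) := fun h => h1 (by rw [← h]; ring)
            simp [h1, hne]]
      exact single_point_sum g _
    rw [h2]
    by_cases hc : c = j
    · subst hc
      have h1 : (g.sum fun (y : List (ZMod s)) (cy : ℤ) => if c :: y = c :: w' then cy else 0)
          = g w' := by
        rw [show (fun (y : List (ZMod s)) (cy : ℤ) => if c :: y = c :: w' then cy else 0)
            = fun (y : List (ZMod s)) (cy : ℤ) => if y = w' then cy else 0 by
          funext y cy; simp]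
        exact single_point_sum g _
      rw [h1]; simp
    · have h1 : (g.sum fun (y : List (ZMod s)) (cy : ℤ) => if c :: y = j :: w' then cy else 0)
          = 0 := sum_zero_terms g (fun y cy => by simp [hc])
      rw [h1]; simp [hc]


variable {s k : ℕ}

def blockSum (i : Fin k → ZMod s) (S : Finset (Fin k)) : ZMod s := ∑ x ∈ S, i x

def allLT (S T : Finset (Fin k)) : Prop := ∀ a ∈ S, ∀ b ∈ T, a < b

def outside (S C : Finset (Fin k)) : Prop :=
  ∀ a ∈ S, (∀ b ∈ C, a < b) ∨ (∀ b ∈ C, b < a)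

def NoCross (C C' : Finset (Fin k)) : Prop :=
  ¬ ∃ a b c d : Fin k, a < b ∧ b < c ∧ c < d ∧ a ∈ C ∧ c ∈ C ∧ b ∈ C' ∧ d ∈ C'

structure Inv (i : Fin k → ZMod s) (r : ℕ) (w : List (ZMod s))
    (σ : List (Finset (Fin k))) (κ : Finset (Finset (Fin k))) : Prop where
  hw : w = σ.map (blockSum i)
  openNe : ∀ S ∈ σ, S.Nonempty
  closedNe : ∀ C ∈ κ, C.Nonempty
  cover : ∀ x : Fin k, (r ≤ (x : ℕ)) ↔ ((∃ S ∈ σ, x ∈ S) ∨ ∃ C ∈ κ, x ∈ C)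
  openClosedDisj : ∀ S ∈ σ, ∀ C ∈ κ, Disjoint S C
  closedDisj : ∀ C ∈ κ, ∀ C' ∈ κ, C ≠ C' → Disjoint C C'
  openOrder : σ.Pairwise allLT
  openOutside : ∀ S ∈ σ, ∀ C ∈ κ, outside S C
  closedNC : ∀ C ∈ κ, ∀ C' ∈ κ, C ≠ C' → NoCross C C'
  closedSum : ∀ C ∈ κ, blockSum i C = 0

def Struct (i : Fin k → ZMod s) (r : ℕ) (w : List (ZMod s)) :=
  {p : List (Finset (Fin k)) × Finset (Finset (Fin k)) // Inv i r w p.1 p.2}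

variable {i : Fin k → ZMod s} {r : ℕ} {w : List (ZMod s)}
  {σ σ₂ : List (Finset (Fin k))} {κ : Finset (Finset (Fin k))}
  {S S₀ C C' : Finset (Fin k)}

/-! ### Basic consequences -/

lemma Inv.procOpen (h : Inv i r w σ κ) (hS : S ∈ σ) {y : Fin k} (hy : y ∈ S) :
    r ≤ (y : ℕ) := (h.cover y).mpr (Or.inl ⟨S, hS, hy⟩)

lemma Inv.procClosed (h : Inv i r w σ κ) (hC : C ∈ κ) {y : Fin k} (hy : y ∈ C) :
    r ≤ (y : ℕ) := (h.cover y).mpr (Or.inr ⟨C, hC, hy⟩)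

lemma lt_of_ge_succ {r : ℕ} (hr : r < k) {y : Fin k} (hy : r + 1 ≤ (y : ℕ)) :
    (⟨r, hr⟩ : Fin k) < y := by
  rw [Fin.lt_def]
  exact Nat.lt_of_succ_le hy

lemma ne_root_of_ge_succ {r : ℕ} (hr : r < k) {y : Fin k} (hy : r + 1 ≤ (y : ℕ)) :
    y ≠ (⟨r, hr⟩ : Fin k) := by
  intro h
  rw [h] at hy
  exact absurd hy (Nat.not_succ_le_self r)

lemma ge_succ_of_ne {r : ℕ} (hr : r < k) {y : Fin k} (hy : r ≤ (y : ℕ))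
    (hne : y ≠ (⟨r, hr⟩ : Fin k)) : r + 1 ≤ (y : ℕ) := by
  rcases Nat.lt_or_ge (y : ℕ) (r + 1) with h | h
  · exact absurd (Fin.ext (show (y : ℕ) = r by omega)) hne
  · exact h

lemma allLT_disjoint (h : allLT S C) : Disjoint S C := by
  rw [Finset.disjoint_left]
  intro a ha ha'
  exact lt_irrefl a (h a ha a ha')

/-- At level `r+1`, the root `⟨r, hr⟩` does not occur in any open or closed set. -/
lemma Inv.rootFreeOpen (h : Inv i (r + 1) w σ κ) (hr : r < k) (hS : S ∈ σ) :
    (⟨r, hr⟩ : Fin k) ∉ S := fun hx => by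
  have := h.procOpen hS hx; simp at this

lemma Inv.rootFreeClosed (h : Inv i (r + 1) w σ κ) (hr : r < k) (hC : C ∈ κ) :
    (⟨r, hr⟩ : Fin k) ∉ C := fun hx => by
  have := h.procClosed hC hx; simp at this

/-! ### Forward lemmas (adding the element `⟨r, hr⟩`) -/

lemma invPush (hr : r < k) (h : Inv i (r + 1) w σ κ) :
    Inv i r (blockSum i {(⟨r, hr⟩ : Fin k)} :: w) ({(⟨r, hr⟩ : Fin k)} :: σ) κ := by
  set x : Fin k := ⟨r, hr⟩ with hx
  constructor
  · simp [h.hw]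
  · intro S hS'
    rcases List.mem_cons.mp hS' with rfl | hS
    · exact Finset.singleton_nonempty x
    · exact h.openNe S hS
  · exact h.closedNe
  · intro y
    constructor
    · intro hy
      by_cases hyx : y = x
      · exact Or.inl ⟨{x}, List.mem_cons_self, by simp [hyx]⟩
      · rcases (h.cover y).mp (ge_succ_of_ne hr hy hyx) with ⟨S, hS, hyS⟩ | hc
        · exact Or.inl ⟨S, List.mem_cons_of_mem _ hS, hyS⟩
        · exact Or.inr hc
    · rintro (⟨S, hS, hyS⟩ | ⟨c, hc, hyc⟩)
      · rcases List.mem_cons.mp hS with rfl | hS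
        · simp_all
        · exact le_trans (by omega) (h.procOpen hS hyS)
      · exact le_trans (by omega) (h.procClosed hc hyc)
  · intro S hS'
    rcases List.mem_cons.mp hS' with rfl | hS <;> intro C hC
    · exact Finset.disjoint_singleton_left.mpr (h.rootFreeClosed hr hC)
    · exact h.openClosedDisj S hS C hC
  · exact h.closedDisj
  · rw [List.pairwise_cons]
    exact ⟨fun S hS a ha b hb => by
      rcases Finset.mem_singleton.mp ha with rfl
      exact lt_of_ge_succ hr (h.procOpen hS hb), h.openOrder⟩
  · intro S hS'
    rcases List.mem_cons.mp hS' with rfl | hS <;> intro C hC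
    · intro a ha
      rcases Finset.mem_singleton.mp ha with rfl
      exact Or.inl fun b hb => lt_of_ge_succ hr (h.procClosed hC hb)
    · exact h.openOutside S hS C hC
  · exact h.closedNC
  · exact h.closedSum

lemma invFuse (hr : r < k) (h : Inv i (r + 1) w (S₀ :: σ₂) κ) :
    Inv i r (blockSum i (insert (⟨r, hr⟩ : Fin k) S₀) :: w.tail)
      ((insert (⟨r, hr⟩ : Fin k) S₀) :: σ₂) κ := by
  set x : Fin k := ⟨r, hr⟩ with hx
  have hxS₀ : x ∉ S₀ := h.rootFreeOpen hr (List.mem_cons_self)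
  have hord := List.pairwise_cons.mp h.openOrder
  constructor
  · rw [h.hw]; simp
  · intro S hS'
    rcases List.mem_cons.mp hS' with rfl | hS
    · exact Finset.insert_nonempty _ _
    · exact h.openNe S (List.mem_cons_of_mem _ hS)
  · exact h.closedNe
  · intro y
    constructor
    · intro hy
      by_cases hyx : y = x
      · exact Or.inl ⟨insert x S₀, List.mem_cons_self, by simp [hyx]⟩
      · rcases (h.cover y).mp (ge_succ_of_ne hr hy hyx) with ⟨S, hS, hyS⟩ | hc
        · rcases List.mem_cons.mp hS with heq | hS
          · exact Or.inl ⟨insert x S₀, List.mem_cons_self,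
              Finset.mem_insert_of_mem (heq ▸ hyS)⟩
          · exact Or.inl ⟨S, List.mem_cons_of_mem _ hS, hyS⟩
        · exact Or.inr hc
    · rintro (⟨S, hS, hyS⟩ | ⟨c, hc, hyc⟩)
      · rcases List.mem_cons.mp hS with rfl | hS
        · rcases Finset.mem_insert.mp hyS with rfl | hyS₀
          · simp [hx]
        
          · exact le_trans (by omega) (h.procOpen (List.mem_cons_self) hyS₀)
        · exact le_trans (by omega) (h.procOpen (List.mem_cons_of_mem _ hS) hyS)
      · exact le_trans (by omega) (h.procClosed hc hyc)
  · intro S hS'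
    rcases List.mem_cons.mp hS' with rfl | hS <;> intro C hC
    · rw [Finset.disjoint_insert_left]
      exact ⟨h.rootFreeClosed hr hC, h.openClosedDisj S₀ (List.mem_cons_self) C hC⟩
    · exact h.openClosedDisj S (List.mem_cons_of_mem _ hS) C hC
  · exact h.closedDisj
  · rw [List.pairwise_cons]
    refine ⟨fun S hS a ha b hb => ?_, hord.2⟩
    rcases Finset.mem_insert.mp ha with rfl | haS₀
    · exact lt_of_ge_succ hr (h.procOpen (List.mem_cons_of_mem _ hS) hb)
    · exact hord.1 S hS a haS₀ b hb
  · intro S hS'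
    rcases List.mem_cons.mp hS' with rfl | hS <;> intro C hC
    · intro a ha
      rcases Finset.mem_insert.mp ha with rfl | haS₀
      · exact Or.inl fun b hb => lt_of_ge_succ hr (h.procClosed hC hb)
      · exact h.openOutside S₀ (List.mem_cons_self) C hC a haS₀
    · exact h.openOutside S (List.mem_cons_of_mem _ hS) C hC
  · exact h.closedNC
  · exact h.closedSum

lemma invPop (hr : r < k) (h : Inv i (r + 1) w (S₀ :: σ₂) κ)
    (hsum : blockSum i (insert (⟨r, hr⟩ : Fin k) S₀) = 0) :
    Inv i r w.tail σ₂ (insert (insert (⟨r, hr⟩ : Fin k) S₀) κ) := by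
  set x : Fin k := ⟨r, hr⟩ with hx
  set B₀ : Finset (Fin k) := insert x S₀ with hB₀
  have hxS₀ : x ∉ S₀ := h.rootFreeOpen hr (List.mem_cons_self)
  have hord := List.pairwise_cons.mp h.openOrder
  have hB₀notκ : B₀ ∉ κ := fun hB => h.rootFreeClosed hr hB (Finset.mem_insert_self _ _)
  constructor
  · rw [h.hw]; simp
  · exact fun S hS => h.openNe S (List.mem_cons_of_mem _ hS)
  · rintro C hC
    rcases Finset.mem_insert.mp hC with rfl | hC
    · exact Finset.insert_nonempty _ _
    · exact h.closedNe C hC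
  · intro y
    constructor
    · intro hy
      by_cases hyx : y = x
      · exact Or.inr ⟨B₀, Finset.mem_insert_self _ _, by simp [hyx, hB₀]⟩
      · rcases (h.cover y).mp (ge_succ_of_ne hr hy hyx) with ⟨S, hS, hyS⟩ | ⟨c, hc, hyc⟩
        · rcases List.mem_cons.mp hS with heq | hS
          · exact Or.inr ⟨B₀, Finset.mem_insert_self _ _,
              Finset.mem_insert_of_mem (heq ▸ hyS)⟩
          · exact Or.inl ⟨S, hS, hyS⟩
        · exact Or.inr ⟨c, Finset.mem_insert_of_mem hc, hyc⟩
    · rintro (⟨S, hS, hyS⟩ | ⟨c, hc, hyc⟩)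
      · exact le_trans (by omega) (h.procOpen (List.mem_cons_of_mem _ hS) hyS)
      · rcases Finset.mem_insert.mp hc with rfl | hc
        · rcases Finset.mem_insert.mp hyc with rfl | hyS₀
          · simp [hx]
          · exact le_trans (by omega) (h.procOpen (List.mem_cons_self) hyS₀)
        · exact le_trans (by omega) (h.procClosed hc hyc)
  · intro S hS C hC
    rcases Finset.mem_insert.mp hC with rfl | hC
    · rw [Finset.disjoint_insert_right]
      exact ⟨h.rootFreeOpen hr (List.mem_cons_of_mem _ hS),
        (allLT_disjoint (hord.1 S hS)).symm⟩
    · exact h.openClosedDisj S (List.mem_cons_of_mem _ hS) C hC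
  · intro C hC C' hC' hne
    rcases Finset.mem_insert.mp hC with rfl | hC <;>
      rcases Finset.mem_insert.mp hC' with rfl | hC'
    · exact absurd rfl hne
    · rw [Finset.disjoint_insert_left]
      exact ⟨h.rootFreeClosed hr hC', h.openClosedDisj S₀ (List.mem_cons_self) C' hC'⟩
    · rw [Finset.disjoint_insert_right]
      exact ⟨h.rootFreeClosed hr hC,
        (h.openClosedDisj S₀ (List.mem_cons_self) C hC).symm⟩
    · exact h.closedDisj C hC C' hC' hne
  · exact hord.2
  · intro S hS C hC
    rcases Finset.mem_insert.mp hC with rfl | hC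
    · intro a ha
      refine Or.inr fun b hb => ?_
      rcases Finset.mem_insert.mp hb with rfl | hbS₀
      · exact lt_of_ge_succ hr (h.procOpen (List.mem_cons_of_mem _ hS) ha)
      · exact hord.1 S hS b hbS₀ a ha
    · exact h.openOutside S (List.mem_cons_of_mem _ hS) C hC
  · intro C hC C' hC' hne
    have key₁ : ∀ C' ∈ κ, NoCross B₀ C' := by
      rintro D hD ⟨a, b, c, d, hab, hbc, hcd, haB, hcB, hbD, hdD⟩
      rcases Finset.mem_insert.mp hcB with rfl | hcS₀
      · have : r + 1 ≤ (b : ℕ) := h.procClosed hD hbD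
        have : (b : ℕ) < r := Fin.lt_def.mp hbc
        omega
      · rcases h.openOutside S₀ (List.mem_cons_self) D hD c hcS₀ with hlt | hgt
        · exact absurd (hlt b hbD) (not_lt.mpr (le_of_lt hbc))
        · exact absurd (hgt d hdD) (not_lt.mpr (le_of_lt hcd))
    have key₂ : ∀ C' ∈ κ, NoCross C' B₀ := by
      rintro D hD ⟨a, b, c, d, hab, hbc, hcd, haD, hcD, hbB, hdB⟩
      rcases Finset.mem_insert.mp hbB with rfl | hbS₀
      · have : r + 1 ≤ (a : ℕ) := h.procClosed hD haD
        have : (a : ℕ) < r := Fin.lt_def.mp hab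
        omega
      · rcases h.openOutside S₀ (List.mem_cons_self) D hD b hbS₀ with hlt | hgt
        · exact absurd (hlt a haD) (not_lt.mpr (le_of_lt hab))
        · exact absurd (hgt c hcD) (not_lt.mpr (le_of_lt hbc))
    rcases Finset.mem_insert.mp hC with rfl | hC <;>
      rcases Finset.mem_insert.mp hC' with rfl | hC'
    · exact absurd rfl hne
    · exact key₁ C' hC'
    · exact key₂ C hC
    · exact h.closedNC C hC C' hC' hne
  · intro C hC
    rcases Finset.mem_insert.mp hC with rfl | hC
    · exact hsum
    · exact h.closedSum C hC

lemma invSkip (hr : r < k) (h : Inv i (r + 1) w σ κ) (h0 : i ⟨r, hr⟩ = 0) :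
    Inv i r w σ (insert {(⟨r, hr⟩ : Fin k)} κ) := by
  set x : Fin k := ⟨r, hr⟩ with hx
  constructor
  · exact h.hw
  · exact h.openNe
  · rintro C hC
    rcases Finset.mem_insert.mp hC with rfl | hC
    · exact Finset.singleton_nonempty x
    · exact h.closedNe C hC
  · intro y
    constructor
    · intro hy
      by_cases hyx : y = x
      · exact Or.inr ⟨{x}, Finset.mem_insert_self _ _, by simp [hyx]⟩
      · rcases (h.cover y).mp (ge_succ_of_ne hr hy hyx) with hS | ⟨c, hc, hyc⟩
        · exact Or.inl hS
        · exact Or.inr ⟨c, Finset.mem_insert_of_mem hc, hyc⟩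
    · rintro (⟨S, hS, hyS⟩ | ⟨c, hc, hyc⟩)
      · exact le_trans (by omega) (h.procOpen hS hyS)
      · rcases Finset.mem_insert.mp hc with rfl | hc
        · rcases Finset.mem_singleton.mp hyc with rfl
          simp [hx]
        · exact le_trans (by omega) (h.procClosed hc hyc)
  · intro S hS C hC
    rcases Finset.mem_insert.mp hC with rfl | hC
    · exact Finset.disjoint_singleton_right.mpr (h.rootFreeOpen hr hS)
    · exact h.openClosedDisj S hS C hC
  · intro C hC C' hC' hne
    rcases Finset.mem_insert.mp hC with rfl | hC <;>
      rcases Finset.mem_insert.mp hC' with rfl | hC'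
    · exact absurd rfl hne
    · exact Finset.disjoint_singleton_left.mpr (h.rootFreeClosed hr hC')
    · exact Finset.disjoint_singleton_right.mpr (h.rootFreeClosed hr hC)
    · exact h.closedDisj C hC C' hC' hne
  · exact h.openOrder
  · intro S hS C hC
    rcases Finset.mem_insert.mp hC with rfl | hC
    · intro a ha
      refine Or.inr fun b hb => ?_
      rcases Finset.mem_singleton.mp hb with rfl
      exact lt_of_ge_succ hr (h.procOpen hS ha)
    · exact h.openOutside S hS C hC
  · intro C hC C' hC' hne
    rcases Finset.mem_insert.mp hC with rfl | hC <;>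
      rcases Finset.mem_insert.mp hC' with rfl | hC'
    · exact absurd rfl hne
    · rintro ⟨a, b, c, d, hab, hbc, hcd, haC, hcC, hbD, hdD⟩
      rcases Finset.mem_singleton.mp haC with rfl
      rcases Finset.mem_singleton.mp hcC with rfl
      exact absurd (lt_trans hab hbc) (lt_irrefl _)
    · rintro ⟨a, b, c, d, hab, hbc, hcd, haC, hcC, hbD, hdD⟩
      rcases Finset.mem_singleton.mp hbD with rfl
      rcases Finset.mem_singleton.mp hdD with rfl
      exact absurd (lt_trans hbc hcd) (lt_irrefl _)
    · exact h.closedNC C hC C' hC' hne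
  · intro C hC
    rcases Finset.mem_insert.mp hC with rfl | hC
    · simpa [blockSum] using h0
    · exact h.closedSum C hC

/-! ### Backward lemmas (removing the element `⟨r, hr⟩`) -/

lemma not_lt_root {r : ℕ} (hr : r < k) {y : Fin k} (hy : r ≤ (y : ℕ)) :
    ¬ (y < (⟨r, hr⟩ : Fin k)) := by
  rw [Fin.lt_def]
  exact not_lt.mpr hy

lemma head_of_mem_open (hr : r < k) (h : Inv i r w σ κ) (hS : S ∈ σ)
    (hxS : (⟨r, hr⟩ : Fin k) ∈ S) : ∃ σ₂, σ = S :: σ₂ := by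
  match σ, hS with
  | S₀ :: σ₂, hS =>
    rcases List.mem_cons.mp hS with heq | hS₂
    · exact ⟨σ₂, by rw [heq]⟩
    · exfalso
      obtain ⟨y, hy⟩ := h.openNe S₀ (List.mem_cons_self)
      have hlt := (List.pairwise_cons.mp h.openOrder).1 S hS₂ y hy _ hxS
      exact not_lt_root hr (h.procOpen (List.mem_cons_self) hy) hlt

lemma invUnpush (hr : r < k) (h : Inv i r w ({(⟨r, hr⟩ : Fin k)} :: σ₂) κ) :
    Inv i (r + 1) w.tail σ₂ κ := by
  set x : Fin k := ⟨r, hr⟩ with hxdef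
  have hord := List.pairwise_cons.mp h.openOrder
  have hxnotS : ∀ S ∈ σ₂, x ∉ S := fun S hS hxS =>
    lt_irrefl x (hord.1 S hS x (Finset.mem_singleton_self x) x hxS)
  have hxnotC : ∀ C ∈ κ, x ∉ C := fun C hC hxC =>
    Finset.disjoint_left.mp
      (h.openClosedDisj _ (List.mem_cons_self) C hC) (Finset.mem_singleton_self x) hxC
  constructor
  · rw [h.hw]; rfl
  · exact fun S hS => h.openNe S (List.mem_cons_of_mem _ hS)
  · exact h.closedNe
  · intro y
    constructor
    · intro hy
      have hyx : y ≠ x := ne_root_of_ge_succ hr hy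
      rcases (h.cover y).mp (le_trans (by omega) hy) with ⟨S, hS, hyS⟩ | hc
      · rcases List.mem_cons.mp hS with heq | hS₂
        · exact absurd (heq ▸ hyS) (fun hm => hyx (Finset.mem_singleton.mp hm))
        · exact Or.inl ⟨S, hS₂, hyS⟩
      · exact Or.inr hc
    · rintro (⟨S, hS, hyS⟩ | ⟨c, hc, hyc⟩)
      · exact ge_succ_of_ne hr (h.procOpen (List.mem_cons_of_mem _ hS) hyS)
          (fun hyx => hxnotS S hS (by subst hyx; exact hyS))
      · exact ge_succ_of_ne hr (h.procClosed hc hyc)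
          (fun hyx => hxnotC c hc (by subst hyx; exact hyc))
  · exact fun S hS => h.openClosedDisj S (List.mem_cons_of_mem _ hS)
  · exact h.closedDisj
  · exact hord.2
  · exact fun S hS => h.openOutside S (List.mem_cons_of_mem _ hS)
  · exact h.closedNC
  · exact h.closedSum

lemma invUnfuse (hr : r < k) (h : Inv i r w ((insert (⟨r, hr⟩ : Fin k) S₀) :: σ₂) κ)
    (hxS₀ : (⟨r, hr⟩ : Fin k) ∉ S₀) (hS₀ : S₀.Nonempty) :
    Inv i (r + 1) (blockSum i S₀ :: w.tail) (S₀ :: σ₂) κ := by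
  set x : Fin k := ⟨r, hr⟩ with hxdef
  have hord := List.pairwise_cons.mp h.openOrder
  have hxnotS : ∀ S ∈ σ₂, x ∉ S := fun S hS hxS =>
    lt_irrefl x (hord.1 S hS x (Finset.mem_insert_self x S₀) x hxS)
  have hxnotC : ∀ C ∈ κ, x ∉ C := fun C hC hxC =>
    Finset.disjoint_left.mp
      (h.openClosedDisj _ (List.mem_cons_self) C hC) (Finset.mem_insert_self x S₀) hxC
  have hS₀sub : S₀ ⊆ insert x S₀ := Finset.subset_insert _ _
  constructor
  · rw [h.hw]; rfl
  · intro S hS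
    rcases List.mem_cons.mp hS with rfl | hS₂
    · exact hS₀
    · exact h.openNe S (List.mem_cons_of_mem _ hS₂)
  · exact h.closedNe
  · intro y
    constructor
    · intro hy
      have hyx : y ≠ x := ne_root_of_ge_succ hr hy
      rcases (h.cover y).mp (le_trans (by omega) hy) with ⟨S, hS, hyS⟩ | hc
      · rcases List.mem_cons.mp hS with heq | hS₂
        · rcases Finset.mem_insert.mp (heq ▸ hyS) with rfl | hyS₀
          · exact absurd rfl hyx
          · exact Or.inl ⟨S₀, List.mem_cons_self, hyS₀⟩
        · exact Or.inl ⟨S, List.mem_cons_of_mem _ hS₂, hyS⟩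
      · exact Or.inr hc
    · rintro (⟨S, hS, hyS⟩ | ⟨c, hc, hyc⟩)
      · rcases List.mem_cons.mp hS with rfl | hS₂
        · exact ge_succ_of_ne hr
            (h.procOpen (List.mem_cons_self) (hS₀sub hyS))
            (fun hyx => hxS₀ (by subst hyx; exact hyS))
        · exact ge_succ_of_ne hr (h.procOpen (List.mem_cons_of_mem _ hS₂) hyS)
            (fun hyx => hxnotS S hS₂ (by subst hyx; exact hyS))
      · exact ge_succ_of_ne hr (h.procClosed hc hyc)
          (fun hyx => hxnotC c hc (by subst hyx; exact hyc))
  · intro S hS C hC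
    rcases List.mem_cons.mp hS with rfl | hS₂
    · exact Finset.disjoint_of_subset_left hS₀sub
        (h.openClosedDisj _ (List.mem_cons_self) C hC)
    · exact h.openClosedDisj S (List.mem_cons_of_mem _ hS₂) C hC
  · exact h.closedDisj
  · rw [List.pairwise_cons]
    exact ⟨fun S hS a ha b hb => hord.1 S hS a (hS₀sub ha) b hb, hord.2⟩
  · intro S hS C hC
    rcases List.mem_cons.mp hS with rfl | hS₂
    · exact fun a ha => h.openOutside _ (List.mem_cons_self) C hC a (hS₀sub ha)
    · exact h.openOutside S (List.mem_cons_of_mem _ hS₂) C hC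
  · exact h.closedNC
  · exact h.closedSum

lemma invUnpop (hr : r < k) (h : Inv i r w σ κ) (hC : C ∈ κ)
    (hxC : (⟨r, hr⟩ : Fin k) ∈ C) (hCne : C ≠ {(⟨r, hr⟩ : Fin k)}) :
    Inv i (r + 1) (blockSum i (C.erase (⟨r, hr⟩ : Fin k)) :: w)
      ((C.erase (⟨r, hr⟩ : Fin k)) :: σ) (κ.erase C) := by
  set x : Fin k := ⟨r, hr⟩ with hxdef
  set E : Finset (Fin k) := C.erase x with hEdef
  have hEsub : E ⊆ C := Finset.erase_subset _ _
  have hxnotS : ∀ S ∈ σ, x ∉ S := fun S hS hxS =>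
    Finset.disjoint_left.mp (h.openClosedDisj S hS C hC) hxS hxC
  have hrootlt : ∀ {y : Fin k}, r ≤ (y : ℕ) → y ≠ x → x < y := fun hy hyx =>
    lt_of_ge_succ hr (ge_succ_of_ne hr hy hyx)
  constructor
  · rw [h.hw, List.map_cons]
  · intro S hS
    rcases List.mem_cons.mp hS with rfl | hS₂
    · rw [Finset.nonempty_iff_ne_empty]
      intro hemp
      rcases (Finset.erase_eq_empty_iff C x).mp hemp with rfl | h1
      · exact absurd hxC (Finset.notMem_empty x)
      · exact hCne h1
    · exact h.openNe S hS₂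
  · exact fun D hD => h.closedNe D (Finset.mem_of_mem_erase hD)
  · intro y
    constructor
    · intro hy
      have hyx : y ≠ x := ne_root_of_ge_succ hr hy
      rcases (h.cover y).mp (le_trans (by omega) hy) with ⟨S, hS, hyS⟩ | ⟨D, hD, hyD⟩
      · exact Or.inl ⟨S, List.mem_cons_of_mem _ hS, hyS⟩
      · by_cases hDC : D = C
        · exact Or.inl ⟨E, List.mem_cons_self,
            Finset.mem_erase.mpr ⟨hyx, hDC ▸ hyD⟩⟩
        · exact Or.inr ⟨D, Finset.mem_erase.mpr ⟨hDC, hD⟩, hyD⟩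
    · rintro (⟨S, hS, hyS⟩ | ⟨D, hD, hyD⟩)
      · rcases List.mem_cons.mp hS with rfl | hS₂
        · exact ge_succ_of_ne hr (h.procClosed hC (hEsub hyS))
            (Finset.mem_erase.mp hyS).1
        · exact ge_succ_of_ne hr (h.procOpen hS₂ hyS)
            (fun hyx => hxnotS S hS₂ (by subst hyx; exact hyS))
      · have hD' := Finset.mem_of_mem_erase hD
        have hDC := (Finset.mem_erase.mp hD).1
        refine ge_succ_of_ne hr (h.procClosed hD' hyD) (fun hyx => ?_)
        exact Finset.disjoint_left.mp (h.closedDisj D hD' C hC hDC) hyD (hyx ▸ hxC)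
  · intro S hS D hD
    have hD' := Finset.mem_of_mem_erase hD
    have hDC := (Finset.mem_erase.mp hD).1
    rcases List.mem_cons.mp hS with rfl | hS₂
    · exact Finset.disjoint_of_subset_left hEsub (h.closedDisj C hC D hD' (Ne.symm hDC))
    · exact h.openClosedDisj S hS₂ D hD'
  · exact fun D hD D' hD' hne =>
      h.closedDisj D (Finset.mem_of_mem_erase hD) D' (Finset.mem_of_mem_erase hD') hne
  · rw [List.pairwise_cons]
    refine ⟨fun S hS a ha b hb => ?_, h.openOrder⟩
    have hbC : x < b := hrootlt (h.procOpen hS hb)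
      (fun hbx => hxnotS S hS (hbx ▸ hb))
    rcases h.openOutside S hS C hC b hb with hlt | hgt
    · exact absurd (hlt x hxC) (not_lt.mpr (le_of_lt hbC))
    · exact hgt a (hEsub ha)
  · intro S hS D hD
    have hD' := Finset.mem_of_mem_erase hD
    have hDC := (Finset.mem_erase.mp hD).1
    rcases List.mem_cons.mp hS with rfl | hS₂
    · intro a ha
      by_contra hcon
      push_neg at hcon
      obtain ⟨⟨b, hbD, hba⟩, ⟨d, hdD, hda⟩⟩ := hcon
      have haC : a ∈ C := hEsub ha
      have hbne : b ≠ a := fun hbe =>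
        Finset.disjoint_left.mp (h.closedDisj C hC D hD' (Ne.symm hDC)) haC (hbe ▸ hbD)
      have hdne : d ≠ a := fun hde =>
        Finset.disjoint_left.mp (h.closedDisj C hC D hD' (Ne.symm hDC)) haC (hde ▸ hdD)
      have hblt : b < a := lt_of_le_of_ne hba hbne
      have hdgt : a < d := lt_of_le_of_ne hda (Ne.symm hdne)
      have hxb : x < b := hrootlt (h.procClosed hD' hbD)
        (fun hbx => Finset.disjoint_left.mp
          (h.closedDisj D hD' C hC hDC) hbD (hbx ▸ hxC))
      exact h.closedNC C hC D hD' (Ne.symm hDC)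
        ⟨x, b, a, d, hxb, hblt, hdgt, hxC, haC, hbD, hdD⟩
    · exact h.openOutside S hS₂ D hD'
  · exact fun D hD D' hD' hne =>
      h.closedNC D (Finset.mem_of_mem_erase hD) D' (Finset.mem_of_mem_erase hD') hne
  · exact fun D hD => h.closedSum D (Finset.mem_of_mem_erase hD)

lemma invUnskip (hr : r < k) (h : Inv i r w σ κ) (hx : {(⟨r, hr⟩ : Fin k)} ∈ κ) :
    Inv i (r + 1) w σ (κ.erase {(⟨r, hr⟩ : Fin k)}) := by
  set x : Fin k := ⟨r, hr⟩ with hxdef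
  have hxnotS : ∀ S ∈ σ, x ∉ S := fun S hS hxS =>
    Finset.disjoint_left.mp (h.openClosedDisj S hS _ hx) hxS (Finset.mem_singleton_self x)
  constructor
  · exact h.hw
  · exact h.openNe
  · exact fun D hD => h.closedNe D (Finset.mem_of_mem_erase hD)
  · intro y
    constructor
    · intro hy
      have hyx : y ≠ x := ne_root_of_ge_succ hr hy
      rcases (h.cover y).mp (le_trans (by omega) hy) with hS | ⟨D, hD, hyD⟩
      · exact Or.inl hS
      · by_cases hDx : D = {x}
        · exact absurd (Finset.mem_singleton.mp (hDx ▸ hyD)) hyx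
        · exact Or.inr ⟨D, Finset.mem_erase.mpr ⟨hDx, hD⟩, hyD⟩
    · rintro (⟨S, hS, hyS⟩ | ⟨D, hD, hyD⟩)
      · exact ge_succ_of_ne hr (h.procOpen hS hyS)
          (fun hyx => hxnotS S hS (by subst hyx; exact hyS))
      · have hD' := Finset.mem_of_mem_erase hD
        have hDx := (Finset.mem_erase.mp hD).1
        refine ge_succ_of_ne hr (h.procClosed hD' hyD) (fun hyx => ?_)
        exact Finset.disjoint_left.mp (h.closedDisj D hD' _ hx hDx) hyD
          (hyx ▸ Finset.mem_singleton_self x)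
  · exact fun S hS D hD => h.openClosedDisj S hS D (Finset.mem_of_mem_erase hD)
  · exact fun D hD D' hD' hne =>
      h.closedDisj D (Finset.mem_of_mem_erase hD) D' (Finset.mem_of_mem_erase hD') hne
  · exact h.openOrder
  · exact fun S hS D hD => h.openOutside S hS D (Finset.mem_of_mem_erase hD)
  · exact fun D hD D' hD' hne =>
      h.closedNC D (Finset.mem_of_mem_erase hD) D' (Finset.mem_of_mem_erase hD') hne
  · exact fun D hD => h.closedSum D (Finset.mem_of_mem_erase hD)

/-! ### Block sum lemmas -/

lemma blockSum_singleton (i : Fin k → ZMod s) (x : Fin k) : blockSum i {x} = i x :=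
  Finset.sum_singleton _ _

lemma blockSum_insert (i : Fin k → ZMod s) {x : Fin k} (hx : x ∉ S) :
    blockSum i (insert x S) = i x + blockSum i S := Finset.sum_insert hx

lemma blockSum_erase (i : Fin k → ZMod s) {x : Fin k} (hx : x ∈ C) :
    i x + blockSum i (C.erase x) = blockSum i C := Finset.add_sum_erase _ _ hx

/-! ### Finiteness of `Struct` -/

lemma sigma_length_le (h : Inv i r w σ κ) : σ.length ≤ k := by
  have hmono : StrictMono (fun j : Fin σ.length =>
      (σ.get j).min' (h.openNe _ (σ.get_mem _))) := by
    intro j j' hjj'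
    exact List.pairwise_iff_get.mp h.openOrder j j' hjj' _
      (Finset.min'_mem _ _) _ (Finset.min'_mem _ _)
  have := Fintype.card_le_of_injective _ hmono.injective
  simpa using this

noncomputable instance structFinite (i : Fin k → ZMod s) (r : ℕ) (w : List (ZMod s)) :
    Finite (Struct i r w) := by
  haveI hfin : Finite {l : List (Finset (Fin k)) | l.length ≤ k} :=
    (List.finite_length_le (Finset (Fin k)) k).to_subtype
  apply Finite.of_injective (fun p : Struct i r w =>
    ((⟨p.1.1, sigma_length_le p.2⟩ : {l : List (Finset (Fin k)) | l.length ≤ k}), p.1.2))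
  intro p q hpq
  have h1 : p.1.1 = q.1.1 := congrArg (fun z => z.1.1) hpq
  have h2 : p.1.2 = q.1.2 := congrArg (fun z => z.2) hpq
  exact Subtype.ext (Prod.ext h1 h2)

/-! ### The step bijection -/

def stepFun (hr : r < k) (w : List (ZMod s)) :
    ({_q : Struct i (r + 1) w.tail // w.head? = some (i ⟨r, hr⟩)} ⊕
      {_q : Struct i (r + 1) ((w.headI - i ⟨r, hr⟩) :: w.tail) // w ≠ []} ⊕
      Struct i (r + 1) ((-(i ⟨r, hr⟩)) :: w) ⊕
      {_q : Struct i (r + 1) w // i ⟨r, hr⟩ = 0}) → Struct i r w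
  | .inl ⟨⟨⟨σ', κ'⟩, hp⟩, hcond⟩ =>
    ⟨({(⟨r, hr⟩ : Fin k)} :: σ', κ'), by
      rcases w with _ | ⟨j, w'⟩
      · exact absurd hcond (by simp)
      · have hj : j = i ⟨r, hr⟩ := by simpa using hcond
        have h' := invPush hr hp
        rw [blockSum_singleton] at h'
        rw [hj]
        exact h'⟩
  | .inr (.inl ⟨⟨⟨σ', κ'⟩, hp⟩, hne⟩) =>
    ⟨((insert (⟨r, hr⟩ : Fin k) σ'.headI) :: σ'.tail, κ'), by
      rcases w with _ | ⟨j, w'⟩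
      · exact absurd rfl hne
      · cases σ' with
        | nil => exact absurd hp.hw (by simp)
        | cons S₀ σ₂ =>
          have hxS₀ : (⟨r, hr⟩ : Fin k) ∉ S₀ := hp.rootFreeOpen hr (List.mem_cons_self)
          have h1 := hp.hw
          rw [List.map_cons] at h1
          injection h1 with h1a h1b
          have h' := invFuse hr hp
          have hw' : blockSum i (insert (⟨r, hr⟩ : Fin k) S₀) = j := by
            rw [blockSum_insert i hxS₀, ← h1a]
            show i ⟨r, hr⟩ + ((j :: w').headI - i ⟨r, hr⟩) = j
            show i ⟨r, hr⟩ + (j - i ⟨r, hr⟩) = j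
            ring
          rw [hw'] at h'
          exact h'⟩
  | .inr (.inr (.inl ⟨⟨σ', κ'⟩, hp⟩)) =>
    ⟨(σ'.tail, insert (insert (⟨r, hr⟩ : Fin k) σ'.headI) κ'), by
      cases σ' with
      | nil => exact absurd hp.hw (by simp)
      | cons S₀ σ₂ =>
        have hxS₀ : (⟨r, hr⟩ : Fin k) ∉ S₀ := hp.rootFreeOpen hr (List.mem_cons_self)
        have h1 := hp.hw
        rw [List.map_cons] at h1
        injection h1 with h1a h1b
        have hsum : blockSum i (insert (⟨r, hr⟩ : Fin k) S₀) = 0 := by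
          rw [blockSum_insert i hxS₀, ← h1a]
          ring
        exact invPop hr hp hsum⟩
  | .inr (.inr (.inr ⟨⟨⟨σ', κ'⟩, hp⟩, h0⟩)) =>
    ⟨(σ', insert {(⟨r, hr⟩ : Fin k)} κ'), invSkip hr hp h0⟩

lemma insert_closed_inj {κ₁ κ₂ : Finset (Finset (Fin k))} {B₁ B₂ : Finset (Fin k)} {x : Fin k}
    (h : insert B₁ κ₁ = insert B₂ κ₂) (hx₁ : ∀ C ∈ κ₁, x ∉ C) (hx₂ : ∀ C ∈ κ₂, x ∉ C)
    (hB₁ : x ∈ B₁) (hB₂ : x ∈ B₂) : B₁ = B₂ ∧ κ₁ = κ₂ := by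
  have hBB : B₁ = B₂ := by
    have hm : B₁ ∈ insert B₂ κ₂ := h ▸ Finset.mem_insert_self _ _
    rcases Finset.mem_insert.mp hm with h' | h'
    · exact h'
    · exact absurd hB₁ (hx₂ _ h')
  subst hBB
  refine ⟨rfl, ?_⟩
  ext C
  constructor
  · intro hC
    have hm : C ∈ insert B₁ κ₂ := h ▸ Finset.mem_insert_of_mem hC
    rcases Finset.mem_insert.mp hm with rfl | h'
    · exact absurd hB₁ (hx₁ _ hC)
    · exact h'
  · intro hC
    have hm : C ∈ insert B₁ κ₁ := h.symm ▸ Finset.mem_insert_of_mem hC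
    rcases Finset.mem_insert.mp hm with rfl | h'
    · exact absurd hB₁ (hx₂ _ hC)
    · exact h'

lemma stepFun_injective (hr : r < k) (w : List (ZMod s)) :
    Function.Injective (stepFun (i := i) hr w) := by
  intro u v huv
  have hd : (stepFun hr w u).1 = (stepFun hr w v).1 := congrArg Subtype.val huv
  clear huv
  rcases u with ⟨⟨⟨σ₁, κ₁⟩, h₁⟩, c₁⟩ | ⟨⟨⟨σ₁, κ₁⟩, h₁⟩, c₁⟩ | ⟨⟨σ₁, κ₁⟩, h₁⟩ | ⟨⟨⟨σ₁, κ₁⟩, h₁⟩, c₁⟩ <;>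
    rcases v with ⟨⟨⟨σ₂, κ₂⟩, h₂⟩, c₂⟩ | ⟨⟨⟨σ₂, κ₂⟩, h₂⟩, c₂⟩ | ⟨⟨σ₂, κ₂⟩, h₂⟩ | ⟨⟨⟨σ₂, κ₂⟩, h₂⟩, c₂⟩ <;>
    simp only [stepFun] at hd <;>
    rw [Prod.mk.injEq] at hd <;>
    obtain ⟨hσ, hκ⟩ := hd
  -- (push, push)
  · injection hσ with _ hσ'
    exact congrArg Sum.inl (Subtype.ext (Subtype.ext (Prod.ext hσ' hκ)))
  -- (push, fuse)
  · exfalso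
    cases σ₂ with
    | nil => exact absurd h₂.hw (by simp)
    | cons S₂ t₂ =>
      injection hσ with hσh _
      obtain ⟨y, hy⟩ := h₂.openNe S₂ (List.mem_cons_self)
      have hyx : y = (⟨r, hr⟩ : Fin k) := by
        have : y ∈ ({(⟨r, hr⟩ : Fin k)} : Finset (Fin k)) := by
          rw [hσh]; exact Finset.mem_insert_of_mem hy
        exact Finset.mem_singleton.mp this
      exact h₂.rootFreeOpen hr (List.mem_cons_self) (hyx ▸ hy)
  -- (push, pop)
  · exfalso
    refine h₁.rootFreeClosed hr (C := insert (⟨r, hr⟩ : Fin k) σ₂.headI)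
      (by rw [hκ]; exact Finset.mem_insert_self _ _) (Finset.mem_insert_self _ _)
  -- (push, skip)
  · exfalso
    refine h₁.rootFreeClosed hr (C := {(⟨r, hr⟩ : Fin k)})
      (by rw [hκ]; exact Finset.mem_insert_self _ _) (Finset.mem_singleton_self _)
  -- (fuse, push)
  · exfalso
    cases σ₁ with
    | nil => exact absurd h₁.hw (by simp)
    | cons S₁ t₁ =>
      injection hσ with hσh _
      obtain ⟨y, hy⟩ := h₁.openNe S₁ (List.mem_cons_self)
      have hyx : y = (⟨r, hr⟩ : Fin k) := by
        have : y ∈ ({(⟨r, hr⟩ : Fin k)} : Finset (Fin k)) := by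
          rw [← hσh]; exact Finset.mem_insert_of_mem hy
        exact Finset.mem_singleton.mp this
      exact h₁.rootFreeOpen hr (List.mem_cons_self) (hyx ▸ hy)
  -- (fuse, fuse)
  · cases σ₁ with
    | nil => exact absurd h₁.hw (by simp)
    | cons S₁ t₁ =>
      cases σ₂ with
      | nil => exact absurd h₂.hw (by simp)
      | cons S₂ t₂ =>
        injection hσ with hσh hσt
        simp only [List.headI_cons] at hσh
        simp only [List.tail_cons] at hσt
        have hS : S₁ = S₂ := by
          rw [← Finset.erase_insert (h₁.rootFreeOpen hr (List.mem_cons_self)), hσh,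
            Finset.erase_insert (h₂.rootFreeOpen hr (List.mem_cons_self))]
        exact congrArg (Sum.inr ∘ Sum.inl)
          (Subtype.ext (Subtype.ext (Prod.ext
            (show S₁ :: t₁ = S₂ :: t₂ by rw [hS, hσt]) hκ)))
  -- (fuse, pop)
  · exfalso
    refine h₁.rootFreeClosed hr (C := insert (⟨r, hr⟩ : Fin k) σ₂.headI)
      (by rw [hκ]; exact Finset.mem_insert_self _ _) (Finset.mem_insert_self _ _)
  -- (fuse, skip)
  · exfalso
    refine h₁.rootFreeClosed hr (C := {(⟨r, hr⟩ : Fin k)})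
      (by rw [hκ]; exact Finset.mem_insert_self _ _) (Finset.mem_singleton_self _)
  -- (pop, push)
  · exfalso
    refine h₂.rootFreeClosed hr (C := insert (⟨r, hr⟩ : Fin k) σ₁.headI)
      (by rw [← hκ]; exact Finset.mem_insert_self _ _) (Finset.mem_insert_self _ _)
  -- (pop, fuse)
  · exfalso
    refine h₂.rootFreeClosed hr (C := insert (⟨r, hr⟩ : Fin k) σ₁.headI)
      (by rw [← hκ]; exact Finset.mem_insert_self _ _) (Finset.mem_insert_self _ _)
  -- (pop, pop)
  · cases σ₁ with
    | nil => exact absurd h₁.hw (by simp)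
    | cons S₁ t₁ =>
      cases σ₂ with
      | nil => exact absurd h₂.hw (by simp)
      | cons S₂ t₂ =>
        simp only [List.headI_cons] at hκ
        simp only [List.tail_cons] at hσ
        obtain ⟨hB, hκ'⟩ := insert_closed_inj hκ
          (fun C hC => h₁.rootFreeClosed hr hC) (fun C hC => h₂.rootFreeClosed hr hC)
          (Finset.mem_insert_self _ _) (Finset.mem_insert_self _ _)
        have hS : S₁ = S₂ := by
          rw [← Finset.erase_insert (h₁.rootFreeOpen hr (List.mem_cons_self)), hB,
            Finset.erase_insert (h₂.rootFreeOpen hr (List.mem_cons_self))]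
        exact congrArg (Sum.inr ∘ Sum.inr ∘ Sum.inl)
          (Subtype.ext (Prod.ext (show S₁ :: t₁ = S₂ :: t₂ by rw [hS, hσ]) hκ'))
  -- (pop, skip)
  · exfalso
    cases σ₁ with
    | nil => exact absurd h₁.hw (by simp)
    | cons S₁ t₁ =>
      have hm : insert (⟨r, hr⟩ : Fin k) S₁ ∈ insert {(⟨r, hr⟩ : Fin k)} κ₂ := by
        rw [← hκ]; exact Finset.mem_insert_self _ _
      rcases Finset.mem_insert.mp hm with h' | h'
      · obtain ⟨y, hy⟩ := h₁.openNe S₁ (List.mem_cons_self)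
        have : y ∈ ({(⟨r, hr⟩ : Fin k)} : Finset (Fin k)) := by
          rw [← h']; exact Finset.mem_insert_of_mem hy
        exact h₁.rootFreeOpen hr (List.mem_cons_self)
          ((Finset.mem_singleton.mp this) ▸ hy)
      · exact h₂.rootFreeClosed hr h' (Finset.mem_insert_self _ _)
  -- (skip, push)
  · exfalso
    refine h₂.rootFreeClosed hr (C := {(⟨r, hr⟩ : Fin k)})
      (by rw [← hκ]; exact Finset.mem_insert_self _ _) (Finset.mem_singleton_self _)
  -- (skip, fuse)
  · exfalso
    refine h₂.rootFreeClosed hr (C := {(⟨r, hr⟩ : Fin k)})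
      (by rw [← hκ]; exact Finset.mem_insert_self _ _) (Finset.mem_singleton_self _)
  -- (skip, pop)
  · exfalso
    cases σ₂ with
    | nil => exact absurd h₂.hw (by simp)
    | cons S₂ t₂ =>
      have hm : insert (⟨r, hr⟩ : Fin k) S₂ ∈ insert {(⟨r, hr⟩ : Fin k)} κ₁ := by
        rw [hκ]; exact Finset.mem_insert_self _ _
      rcases Finset.mem_insert.mp hm with h' | h'
      · obtain ⟨y, hy⟩ := h₂.openNe S₂ (List.mem_cons_self)
        have : y ∈ ({(⟨r, hr⟩ : Fin k)} : Finset (Fin k)) := by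
          rw [← h']; exact Finset.mem_insert_of_mem hy
        exact h₂.rootFreeOpen hr (List.mem_cons_self)
          ((Finset.mem_singleton.mp this) ▸ hy)
      · exact h₁.rootFreeClosed hr h' (Finset.mem_insert_self _ _)
  -- (skip, skip)
  · obtain ⟨_, hκ'⟩ := insert_closed_inj hκ
      (fun C hC => h₁.rootFreeClosed hr hC) (fun C hC => h₂.rootFreeClosed hr hC)
      (Finset.mem_singleton_self _) (Finset.mem_singleton_self _)
    exact congrArg (Sum.inr ∘ Sum.inr ∘ Sum.inr)
      (Subtype.ext (Subtype.ext (Prod.ext hσ hκ')))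

lemma stepFun_surjective (hr : r < k) (w : List (ZMod s)) :
    Function.Surjective (stepFun (i := i) hr w) := by
  rintro ⟨⟨σ, κ⟩, h⟩
  have hproc := (h.cover ⟨r, hr⟩).mp (le_refl r)
  rcases hproc with ⟨S, hS, hxS⟩ | ⟨C, hC, hxC⟩
  · obtain ⟨σ₂, hσeq⟩ := head_of_mem_open hr h hS hxS
    subst hσeq
    by_cases hSx : S = {(⟨r, hr⟩ : Fin k)}
    · subst hSx
      refine ⟨Sum.inl ⟨⟨(σ₂, κ), invUnpush hr h⟩, ?_⟩, ?_⟩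
      · rw [h.hw]
        simp [blockSum_singleton]
      · exact Subtype.ext rfl
    · have hxS₀ : (⟨r, hr⟩ : Fin k) ∉ S.erase (⟨r, hr⟩ : Fin k) := Finset.notMem_erase _ _
      have hS₀ne : (S.erase (⟨r, hr⟩ : Fin k)).Nonempty := by
        rw [Finset.nonempty_iff_ne_empty]
        intro hemp
        rcases (Finset.erase_eq_empty_iff S _).mp hemp with rfl | h1
        · exact absurd hxS (Finset.notMem_empty _)
        · exact hSx h1
      have hins : insert (⟨r, hr⟩ : Fin k) (S.erase (⟨r, hr⟩ : Fin k)) = S :=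
        Finset.insert_erase hxS
      have h' : Inv i r w
          ((insert (⟨r, hr⟩ : Fin k) (S.erase (⟨r, hr⟩ : Fin k))) :: σ₂) κ := by
        rw [hins]; exact h
      have hup := invUnfuse hr h' hxS₀ hS₀ne
      have hhead : w.headI = blockSum i S := by rw [h.hw]; rfl
      have h2 : blockSum i S
          = i ⟨r, hr⟩ + blockSum i (S.erase (⟨r, hr⟩ : Fin k)) := (blockSum_erase i hxS).symm
      have hBS₀ : blockSum i (S.erase (⟨r, hr⟩ : Fin k)) = w.headI - i ⟨r, hr⟩ := by
        rw [hhead, h2]; ring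
      have hwne : w ≠ [] := by rw [h.hw]; simp
      refine ⟨Sum.inr (Sum.inl ⟨⟨(S.erase (⟨r, hr⟩ : Fin k) :: σ₂, κ), ?_⟩, hwne⟩), ?_⟩
      · rw [← hBS₀]; exact hup
      · apply Subtype.ext
        show (insert (⟨r, hr⟩ : Fin k) (S.erase (⟨r, hr⟩ : Fin k)) :: σ₂, κ) = (S :: σ₂, κ)
        rw [hins]
  · by_cases hCx : C = {(⟨r, hr⟩ : Fin k)}
    · subst hCx
      have h0 : i ⟨r, hr⟩ = 0 := by
        have := h.closedSum _ hC
        rwa [blockSum_singleton] at this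
      refine ⟨Sum.inr (Sum.inr (Sum.inr ⟨⟨(σ, κ.erase _), invUnskip hr h hC⟩, h0⟩)), ?_⟩
      apply Subtype.ext
      show (σ, insert {(⟨r, hr⟩ : Fin k)} (κ.erase {(⟨r, hr⟩ : Fin k)})) = (σ, κ)
      rw [Finset.insert_erase hC]
    · have hup := invUnpop hr h hC hxC hCx
      have hBE : blockSum i (C.erase (⟨r, hr⟩ : Fin k)) = -(i ⟨r, hr⟩) := by
        have h2 : i ⟨r, hr⟩ + blockSum i (C.erase (⟨r, hr⟩ : Fin k)) = 0 := by
          rw [blockSum_erase i hxC, h.closedSum C hC]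
        exact eq_neg_of_add_eq_zero_right h2
      refine ⟨Sum.inr (Sum.inr (Sum.inl ⟨(C.erase (⟨r, hr⟩ : Fin k) :: σ, κ.erase C), ?_⟩)), ?_⟩
      · rw [← hBE]; exact hup
      · apply Subtype.ext
        show ((C.erase (⟨r, hr⟩ : Fin k) :: σ).tail,
          insert (insert (⟨r, hr⟩ : Fin k) ((C.erase (⟨r, hr⟩ : Fin k) :: σ).headI))
            (κ.erase C)) = (σ, κ)
        rw [List.tail_cons, List.headI_cons, Finset.insert_erase hxC, Finset.insert_erase hC]


lemma card_subtype_const {α : Type*} [Finite α] (c : Prop) [Decidable c] :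
    Nat.card {_q : α // c} = if c then Nat.card α else 0 := by
  split_ifs with hc
  · exact Nat.card_congr (Equiv.subtypeUnivEquiv fun _ => hc)
  · haveI : IsEmpty {_q : α // c} := ⟨fun q => hc q.2⟩
    exact Nat.card_of_isEmpty

lemma card_step (hr : r < k) (w : List (ZMod s)) :
    Nat.card (Struct i r w) =
      ((if w.head? = some (i ⟨r, hr⟩) then Nat.card (Struct i (r + 1) w.tail) else 0) +
        (if w = [] then 0
          else Nat.card (Struct i (r + 1) ((w.headI - i ⟨r, hr⟩) :: w.tail))) +
        Nat.card (Struct i (r + 1) ((-(i ⟨r, hr⟩)) :: w))) +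
      (if i ⟨r, hr⟩ = 0 then Nat.card (Struct i (r + 1) w) else 0) := by
  classical
  rw [← Nat.card_congr (Equiv.ofBijective _
    ⟨stepFun_injective hr w, stepFun_surjective (i := i) hr w⟩)]
  rw [Nat.card_sum, Nat.card_sum, Nat.card_sum,
    card_subtype_const, card_subtype_const, card_subtype_const]
  rw [ite_not]
  ring

lemma sigma_eq_nil (h : Inv i k w σ κ) : σ = [] := by
  cases σ with
  | nil => rfl
  | cons S σ' =>
    obtain ⟨y, hy⟩ := h.openNe S (List.mem_cons_self)
    exact absurd (h.procOpen (List.mem_cons_self) hy) (Nat.not_le.mpr y.isLt)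

lemma invBase (i : Fin k → ZMod s) : Inv i k [] [] ∅ := by
  constructor
  · rfl
  · simp
  · simp
  · intro x
    constructor
    · intro hx
      exact absurd hx (Nat.not_le.mpr x.isLt)
    · rintro (⟨S, hS, _⟩ | ⟨C, hC, _⟩)
      · exact absurd hS (List.not_mem_nil)
      · exact absurd hC (Finset.notMem_empty C)
  · simp
  · simp
  · exact List.Pairwise.nil
  · simp
  · simp
  · simp

lemma card_base (i : Fin k → ZMod s) (w : List (ZMod s)) :
    Nat.card (Struct i k w) = if w = [] then 1 else 0 := by
  split_ifs with hwe
  · subst hwe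
    haveI : Nonempty (Struct i k []) := ⟨⟨([], ∅), invBase i⟩⟩
    haveI : Subsingleton (Struct i k []) := ⟨by
      rintro ⟨⟨σ₁, κ₁⟩, h₁⟩ ⟨⟨σ₂, κ₂⟩, h₂⟩
      have e1 : σ₁ = [] := sigma_eq_nil h₁
      have e2 : σ₂ = [] := sigma_eq_nil h₂
      have e3 : κ₁ = ∅ := by
        rw [Finset.eq_empty_iff_forall_notMem]
        intro C hC
        obtain ⟨y, hy⟩ := h₁.closedNe C hC
        exact absurd (h₁.procClosed hC hy) (Nat.not_le.mpr y.isLt)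
      have e4 : κ₂ = ∅ := by
        rw [Finset.eq_empty_iff_forall_notMem]
        intro C hC
        obtain ⟨y, hy⟩ := h₂.closedNe C hC
        exact absurd (h₂.procClosed hC hy) (Nat.not_le.mpr y.isLt)
      apply Subtype.ext
      rw [Prod.mk.injEq]
      exact ⟨by rw [e1, e2], by rw [e3, e4]⟩⟩
    exact Nat.card_unique
  · haveI : IsEmpty (Struct i k w) := ⟨fun p => hwe (by rw [p.2.hw, sigma_eq_nil p.2]; rfl)⟩
    exact Nat.card_of_isEmpty

/-! ### The partition equivalence at the bottom level -/

noncomputable def partEquiv (i : Fin k → ZMod s) :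
    Struct i 0 [] ≃ {P : Finset (Finset (Fin k)) //
      IsPartitionOfFin k P ∧ IsNoncrossingFin k P ∧ ∀ B ∈ P, ∑ x ∈ B, i x = 0} where
  toFun p := ⟨p.1.2, by
    obtain ⟨⟨σ, κ⟩, h⟩ := p
    have hσ : σ = [] := by
      cases σ with
      | nil => rfl
      | cons a l => exact absurd h.hw (by simp)
    subst hσ
    refine ⟨⟨?_, ?_⟩, ?_, ?_⟩
    · intro hemp
      obtain ⟨y, hy⟩ := h.closedNe ∅ hemp
      exact Finset.notMem_empty y hy
    · intro x
      rcases (h.cover x).mp (Nat.zero_le _) with ⟨S, hS, _⟩ | ⟨C, hC, hxC⟩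
      · exact absurd hS (List.not_mem_nil)
      · refine ⟨C, ⟨hC, hxC⟩, fun B hB => ?_⟩
        by_contra hne
        exact Finset.disjoint_left.mp (h.closedDisj B hB.1 C hC hne) hB.2 hxC
    · rintro ⟨a, b, c, d, hab, hbc, hcd, ⟨B, hB, haB, hcB⟩, ⟨B', hB', hbB', hdB'⟩, hnab⟩
      have hne : B ≠ B' := fun he => hnab ⟨B, hB, haB, he ▸ hbB'⟩
      exact h.closedNC B hB B' hB' hne ⟨a, b, c, d, hab, hbc, hcd, haB, hcB, hbB', hdB'⟩
    · exact fun B hB => h.closedSum B hB⟩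
  invFun P := ⟨([], P.1), by
    obtain ⟨hpart, hnc, hsum⟩ := P.2
    constructor
    · rfl
    · simp
    · intro C hC
      rw [Finset.nonempty_iff_ne_empty]
      rintro rfl
      exact hpart.1 hC
    · intro x
      constructor
      · intro _
        obtain ⟨B, hB⟩ := (hpart.2 x).exists
        exact Or.inr ⟨B, hB.1, hB.2⟩
      · intro _
        exact Nat.zero_le _
    · simp
    · intro C hC C' hC' hne
      rw [Finset.disjoint_left]
      intro a haC haC'
      exact hne ((hpart.2 a).unique ⟨hC, haC⟩ ⟨hC', haC'⟩)
    · exact List.Pairwise.nil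
    · simp
    · intro C hC C' hC' hne
      rintro ⟨a, b, c, d, hab, hbc, hcd, haC, hcC, hbC', hdC'⟩
      refine hnc ⟨a, b, c, d, hab, hbc, hcd, ⟨C, hC, haC, hcC⟩, ⟨C', hC', hbC', hdC'⟩, ?_⟩
      rintro ⟨B, hB, haB, hbB⟩
      refine hne ?_
      rw [← (hpart.2 a).unique ⟨hB, haB⟩ ⟨hC, haC⟩]
      exact (hpart.2 b).unique ⟨hB, hbB⟩ ⟨hC', hbC'⟩
    · exact fun C hC => hsum C hC⟩
  left_inv p := by
    obtain ⟨⟨σ, κ⟩, h⟩ := p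
    have hσ : σ = [] := by
      cases σ with
      | nil => rfl
      | cons a l => exact absurd h.hw (by simp)
    subst hσ
    rfl
  right_inv P := rfl

/-! ### The product from position `r` on -/

noncomputable def prodFrom (i : Fin k → ZMod s) (r : ℕ) : List (ZMod s) →₀ ℤ :=
  ((List.ofFn fun t : Fin k =>
      (Finsupp.single [i t] 1 +
        if i t = 0 then Finsupp.single ([] : List (ZMod s)) (1 : ℤ) else 0)).drop r).foldr
    (fusionMul s) (Finsupp.single [] 1)

lemma prodFrom_ge (i : Fin k → ZMod s) (hr : k ≤ r) :
    prodFrom i r = Finsupp.single [] 1 := by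
  unfold prodFrom
  rw [List.drop_eq_nil_of_le (by simpa using hr)]
  rfl

lemma prodFrom_succ (i : Fin k → ZMod s) (hr : r < k) :
    prodFrom i r = fusionMul s (Finsupp.single [i ⟨r, hr⟩] 1 +
      if i ⟨r, hr⟩ = 0 then Finsupp.single [] 1 else 0) (prodFrom i (r + 1)) := by
  unfold prodFrom
  rw [List.drop_eq_getElem_cons (by simpa using hr), List.foldr_cons]
  congr 1
  rw [List.getElem_ofFn]

lemma fusionMul_zero_left (s : ℕ) (g : List (ZMod s) →₀ ℤ) : fusionMul s 0 g = 0 :=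
  Finsupp.sum_zero_index

lemma key_mul_full (c : ZMod s) (g : List (ZMod s) →₀ ℤ) (w : List (ZMod s)) :
    (fusionMul s (Finsupp.single [c] 1 +
        if c = 0 then Finsupp.single [] 1 else 0) g) w =
      ((match w with
        | [] => 0
        | j :: w' => (if c = j then g w' else 0) + g ((j - c) :: w'))
        + g ((-c) :: w)) + (if c = 0 then g w else 0) := by
  rw [fusionMul_add_left, Finsupp.add_apply, key_mul_apply]
  congr 1
  split_ifs with hc
  · rw [fusionMul_id_left]
  · rw [fusionMul_zero_left]
    rfl

lemma key_mul_full_nil (c : ZMod s) (g : List (ZMod s) →₀ ℤ) :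
    (fusionMul s (Finsupp.single [c] 1 +
        if c = 0 then Finsupp.single [] 1 else 0) g) [] =
      (0 + g [-c]) + (if c = 0 then g [] else 0) := by
  have h := key_mul_full c g []
  simpa using h

lemma key_mul_full_cons (c j : ZMod s) (g : List (ZMod s) →₀ ℤ) (w' : List (ZMod s)) :
    (fusionMul s (Finsupp.single [c] 1 +
        if c = 0 then Finsupp.single [] 1 else 0) g) (j :: w') =
      (((if c = j then g w' else 0) + g ((j - c) :: w'))
        + g ((-c) :: j :: w')) + (if c = 0 then g (j :: w') else 0) := by
  have h := key_mul_full c g (j :: w')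
  simpa using h

lemma main_count (i : Fin k → ZMod s) :
    ∀ (n r : ℕ), r + n = k → ∀ w, (prodFrom i r) w = (Nat.card (Struct i r w) : ℤ) := by
  intro n
  induction n with
  | zero =>
    intro r hrk w
    have hrk' : r = k := by omega
    subst hrk'
    rw [prodFrom_ge i le_rfl, card_base, Finsupp.single_apply]
    rcases w with _ | ⟨j, w'⟩ <;> simp
  | succ n ih =>
    intro r hrk w
    have hr : r < k := by omega
    have ih' := ih (r + 1) (by omega)
    rw [prodFrom_succ i hr]
    rcases w with _ | ⟨j, w'⟩
    · rw [key_mul_full_nil, card_step hr []]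
      rw [ih' [-(i ⟨r, hr⟩)], ih' []]
      simp only [List.head?_nil, List.tail_nil, reduceCtorEq, if_false, if_pos rfl]
      push_cast
      split_ifs <;> ring
    · rw [key_mul_full_cons, card_step hr (j :: w')]
      rw [ih' w', ih' ((j - i ⟨r, hr⟩) :: w'), ih' ((-(i ⟨r, hr⟩)) :: j :: w'),
        ih' (j :: w')]
      simp only [List.head?_cons, List.headI_cons, List.tail_cons, Option.some.injEq,
        reduceCtorEq, if_false]
      push_cast
      by_cases hc : i ⟨r, hr⟩ = j <;> by_cases h0 : i ⟨r, hr⟩ = 0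
      · rw [if_pos hc, if_pos (show j = i ⟨r, hr⟩ from hc.symm), if_pos h0]
      · rw [if_pos hc, if_pos (show j = i ⟨r, hr⟩ from hc.symm), if_neg h0]
      · rw [if_neg hc, if_neg (show ¬ j = i ⟨r, hr⟩ from fun h => hc h.symm), if_pos h0]
      · rw [if_neg hc, if_neg (show ¬ j = i ⟨r, hr⟩ from fun h => hc h.symm), if_neg h0]

end FusionNC

/-- the coefficient of the empty word in the fusion product
`P = (a_{i_1} + δ_{i_1,0} a_∅) ⊗ ⋯ ⊗ (a_{i_k} + δ_{i_k,0} a_∅)` equals the number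
of noncrossing partitions of `{1, …, k}` all of whose blocks have index sum `0`
in `ℤ/sℤ`. -/
theorem fusion_unit_count_noncrossing (s k : ℕ) (hs : 1 ≤ s) (hk : 1 ≤ k)
    (i : Fin k → ZMod s) :
    ((List.ofFn fun r : Fin k =>
        (Finsupp.single [i r] 1 +
          if i r = 0 then Finsupp.single ([] : List (ZMod s)) (1 : ℤ) else 0)).foldr
      (fusionMul s) (Finsupp.single [] 1)) [] =
    (Nat.card {P : Finset (Finset (Fin k)) //
        IsPartitionOfFin k P ∧ IsNoncrossingFin k P ∧
          ∀ B ∈ P, ∑ x ∈ B, i x = 0} : ℤ) := by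
  classical
  have h0 : ((List.ofFn fun r : Fin k =>
        (Finsupp.single [i r] 1 +
          if i r = 0 then Finsupp.single ([] : List (ZMod s)) (1 : ℤ) else 0)).foldr
      (fusionMul s) (Finsupp.single [] 1)) []
      = (FusionNC.prodFrom i 0) [] := rfl
  rw [h0, FusionNC.main_count i k 0 (by omega) []]
  congr 1
  exact Nat.card_congr (FusionNC.partEquiv i)
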